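/- Let T ∈ ℝ^{k×k} be a row-stochastic noise transition matrix (T_{ij} ≥ 0 and Σ_j T_{ij} = 1 for every i) satisfying the diagonally-dominant condition T_{ii} > max{max_{j≠i} T_{ij}, max_{j≠i} T_{ji}} for every i. Suppose, as in the class-conditional noise model, that the softmax output of the classifier on a sample with clean class c is the row vector (T_{c1}, ..., T_{ck}). Then for any observed label ỹ and any class c ≠ ỹ, the clean sample (whose clean class equals ỹ) has strictly smaller Jensen-Shannon divergence to the observed label than the noisy sample (whose clean class is c): JSD((T_{ỹ1},...,T_{ỹk}), δ_ỹ) < JSD((T_{c1},...,T_{ck}), δ_ỹ). -/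

import Mathlib

open Finset

/-- Jensen-Shannon divergence between two probability vectors on `Fin k`.
Terms with `P j = 0` (resp. `Q j = 0`) vanish since they are multiplied by `0`. -/
noncomputable def JSD {k : ℕ} (P Q : Fin k → ℝ) : ℝ :=
  (1 / 2) * ∑ j, P j * Real.log (P j / ((P j + Q j) / 2)) +
  (1 / 2) * ∑ j, Q j * Real.log (Q j / ((P j + Q j) / 2))

/-- The one-hot probability vector at class `y`. -/
def oneHot {k : ℕ} (y : Fin k) : Fin k → ℝ := fun j => if j = y then 1 else 0

lemma hfun_anti :
    StrictAntiOn (fun p : ℝ => p * Real.log p - (1 + p) * Real.log (1 + p)) (Set.Ici 0) := by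
  apply strictAntiOn_of_deriv_neg (convex_Ici 0)
  · exact (Real.continuous_mul_log.sub
      (Real.continuous_mul_log.comp (continuous_const.add continuous_id))).continuousOn
  · intro x hx
    rw [interior_Ici] at hx
    have hx0 : (0:ℝ) < x := hx
    have h1 : HasDerivAt (fun p : ℝ => p * Real.log p) (Real.log x + 1) x :=
      Real.hasDerivAt_mul_log (ne_of_gt hx0)
    have h2 : HasDerivAt (fun p : ℝ => (1 + p) * Real.log (1 + p))
        ((Real.log (1 + x) + 1) * 1) x := by
      exact (Real.hasDerivAt_mul_log (by positivity : (1:ℝ) + x ≠ 0)).comp x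
        ((hasDerivAt_id x).const_add 1)
    have h3 : deriv (fun p : ℝ => p * Real.log p - (1 + p) * Real.log (1 + p)) x =
        Real.log x + 1 - (Real.log (1 + x) + 1) * 1 := (h1.sub h2).deriv
    rw [h3]
    have : Real.log x < Real.log (1 + x) := Real.log_lt_log hx0 (by linarith)
    nlinarith

lemma term_ne (x : ℝ) (hx : 0 ≤ x) :
    x * Real.log (x / (x / 2)) = x * Real.log 2 := by
  rcases eq_or_lt_of_le hx with h | h
  · simp [← h]
  · congr 1
    have hx' : x ≠ 0 := ne_of_gt h
    have : x / (x / 2) = 2 := by field_simp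
    rw [this]

lemma term_eq (x : ℝ) (hx : 0 ≤ x) :
    x * Real.log (x / ((x + 1) / 2)) =
      x * (Real.log 2 + Real.log x - Real.log (1 + x)) := by
  rcases eq_or_lt_of_le hx with h | h
  · simp [← h]
  · have hx' : x ≠ 0 := ne_of_gt h
    have hx1 : x + 1 ≠ 0 := by positivity
    have h2 : ((x + 1) / 2 : ℝ) ≠ 0 := by positivity
    rw [Real.log_div hx' h2, Real.log_div hx1 two_ne_zero]
    have : (1 + x : ℝ) = x + 1 := by ring
    rw [this]
    ring

lemma JSD_onehot {k : ℕ} (P : Fin k → ℝ) (h0 : ∀ j, 0 ≤ P j)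
    (h1 : ∑ j, P j = 1) (y : Fin k) :
    JSD P (oneHot y) =
      (1 / 2) * (2 * Real.log 2 + P y * Real.log (P y)
        - (1 + P y) * Real.log (1 + P y)) := by
  unfold JSD oneHot
  have hPy1 : (0:ℝ) < P y + 1 := by have := h0 y; linarith
  have hsum2 : ∑ j, (if j = y then (1:ℝ) else 0) *
      Real.log ((if j = y then (1:ℝ) else 0) / ((P j + if j = y then (1:ℝ) else 0) / 2)) =
      Real.log 2 - Real.log (1 + P y) := by
    rw [Finset.sum_eq_single y]
    · rw [if_pos rfl]
      have he : (1:ℝ) / ((P y + 1) / 2) = 2 / (1 + P y) := by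
        rw [one_div_div, add_comm]
      rw [he, Real.log_div two_ne_zero (by linarith)]
      ring
    · intro b _ hb
      simp [hb]
    · simp
  have hsum1 : ∑ j, P j * Real.log (P j / ((P j + if j = y then (1:ℝ) else 0) / 2)) =
      (1 - P y) * Real.log 2 + P y * (Real.log 2 + Real.log (P y) - Real.log (1 + P y)) := by
    rw [← Finset.add_sum_erase _ _ (Finset.mem_univ y)]
    have he : ∑ j ∈ Finset.univ.erase y,
        P j * Real.log (P j / ((P j + if j = y then (1:ℝ) else 0) / 2)) =
        ∑ j ∈ Finset.univ.erase y, P j * Real.log 2 := by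
      apply Finset.sum_congr rfl
      intro j hj
      have hjy : j ≠ y := Finset.ne_of_mem_erase hj
      rw [if_neg hjy, add_zero]
      exact term_ne (P j) (h0 j)
    rw [he, ← Finset.sum_mul, Finset.sum_erase_eq_sub (Finset.mem_univ y), h1,
      if_pos rfl, term_eq (P y) (h0 y)]
    ring
  rw [hsum1, hsum2]
  ring

/-- If the row-stochastic noise transition matrix `T` is diagonally dominant
(`T i i > max {max_{j ≠ i} T i j, max_{j ≠ i} T j i}` for all `i`) and the softmax output
on a sample with clean class `c` is the row `T c`, then for any observed label `ytil` and any
clean class `c ≠ ytil`, the clean sample has strictly smaller JSD to the observed label: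
`JSD (T ytil) δ_ytil < JSD (T c) δ_ytil`. -/
theorem jsd_clean_lt_noisy_of_diagonally_dominant {k : ℕ}
    (T : Fin k → Fin k → ℝ)
    (hT0 : ∀ i j, 0 ≤ T i j) (hT1 : ∀ i, ∑ j, T i j = 1)
    (hdom : ∀ i j, j ≠ i → T i j < T i i ∧ T j i < T i i)
    (ytil c : Fin k) (hc : c ≠ ytil) :
    JSD (T ytil) (oneHot ytil) < JSD (T c) (oneHot ytil) := by
  rw [JSD_onehot (T ytil) (hT0 ytil) (hT1 ytil) ytil,
    JSD_onehot (T c) (hT0 c) (hT1 c) ytil]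
  have hlt : T c ytil < T ytil ytil := (hdom ytil c hc).2
  have := hfun_anti (Set.mem_Ici.2 (hT0 c ytil)) (Set.mem_Ici.2 (hT0 ytil ytil)) hlt
  simp only at this
  linarith
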